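/- With the setup of the previous computation (g(b₁) = k₁b₁ + k₂b₂ with k₂·b₂ ≠ 0, g₀(b₃) = l₁b₃ + l₂b₁ with l₂·b₁ ≠ 0 and l₂(k₁−1)·b₁ well-defined), the image (g₀⁻¹ g g₀)(⟨b₃⟩) is contained in ⟨b₃⟩ ⊕ ⟨b₂⟩ if and only if (k₁ − 1)·b₁ is annihilated by l₂, i.e. l₂(k₁−1)·b₁ = 0. -/
import Mathlib


theorem stmt_9 {B : Type*} [AddCommGroup B] (b₁ b₂ b₃ : B) (k₁ k₂ l₁ l₂ : ℤ)
    (hindep : AddSubgroup.zmultiples b₁ ⊓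
        (AddSubgroup.zmultiples b₂ ⊔ AddSubgroup.zmultiples b₃) = ⊥)
    (g g₀ : B ≃+ B)
    (hg1 : g b₁ = k₁ • b₁ + k₂ • b₂) (hg2 : g b₂ = b₂) (hg3 : g b₃ = b₃)
    (hg01 : g₀ b₁ = b₁) (hg02 : g₀ b₂ = b₂) (hg03 : g₀ b₃ = l₁ • b₃ + l₂ • b₁) :
    (∀ x ∈ AddSubgroup.zmultiples b₃,
        g₀.symm (g (g₀ x)) ∈ AddSubgroup.zmultiples b₃ ⊔ AddSubgroup.zmultiples b₂)
      ↔ (l₂ * (k₁ - 1)) • b₁ = 0 := by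
  have key : ∀ n : ℤ, g₀.symm (g (g₀ (n • b₃)))
      = n • b₃ + (n * (l₂ * k₂)) • b₂ + (n * (l₂ * (k₁ - 1))) • b₁ := by
    intro n
    apply g₀.injective
    rw [g₀.apply_symm_apply]
    simp only [map_zsmul, map_add, hg1, hg2, hg3, hg01, hg02, hg03, smul_add, smul_smul]
    module
  constructor
  · intro h
    have h1 := h b₃ (AddSubgroup.mem_zmultiples b₃)
    have h1' : g₀.symm (g (g₀ b₃))
        = b₃ + (l₂ * k₂) • b₂ + (l₂ * (k₁ - 1)) • b₁ := by
      have := key 1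
      simpa using this
    rw [h1'] at h1
    have hmem : (l₂ * (k₁ - 1)) • b₁
        ∈ AddSubgroup.zmultiples b₃ ⊔ AddSubgroup.zmultiples b₂ := by
      have : (l₂ * (k₁ - 1)) • b₁
          = (b₃ + (l₂ * k₂) • b₂ + (l₂ * (k₁ - 1)) • b₁) - b₃ - (l₂ * k₂) • b₂ := by
        abel
      rw [this]
      exact AddSubgroup.sub_mem _ (AddSubgroup.sub_mem _ h1
        (AddSubgroup.mem_sup_left (AddSubgroup.mem_zmultiples b₃)))
        (AddSubgroup.mem_sup_right (AddSubgroup.zsmul_mem _ (AddSubgroup.mem_zmultiples b₂) _))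
    have : (l₂ * (k₁ - 1)) • b₁ ∈ (⊥ : AddSubgroup B) := by
      rw [← hindep]
      exact ⟨AddSubgroup.zsmul_mem _ (AddSubgroup.mem_zmultiples b₁) _, (sup_comm (AddSubgroup.zmultiples b₂) (AddSubgroup.zmultiples b₃)) ▸ hmem⟩
    simpa using this
  · intro h x hx
    obtain ⟨n, rfl⟩ := hx
    rw [key n, mul_smul n (l₂ * (k₁ - 1)) b₁, h, smul_zero, add_zero]
    exact AddSubgroup.add_mem _
      (AddSubgroup.mem_sup_left (AddSubgroup.zsmul_mem _ (AddSubgroup.mem_zmultiples b₃) _))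
      (AddSubgroup.mem_sup_right (AddSubgroup.zsmul_mem _ (AddSubgroup.mem_zmultiples b₂) _))
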